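/- Let X be a compact metric space, f : X → X continuous, and f̄ the induced map on the hyperspace K(X). Then f is weakly mixing if and only if f̄ is weakly mixing, and these are equivalent to f̄ being transitive. -/

import Mathlib

open TopologicalSpace

/-- The induced map on the hyperspace of nonempty compact subsets. -/
def barMap {X : Type*} [TopologicalSpace X] (f : X → X) (hf : Continuous f) :
    NonemptyCompacts X → NonemptyCompacts X :=
  fun A => ⟨⟨f '' A, A.isCompact.image hf⟩, A.nonempty.image f⟩

/-- Topological transitivity. -/
def IsTransitive {X : Type*} [TopologicalSpace X] (f : X → X) : Prop :=
  ∀ U V : Set X, IsOpen U → IsOpen V → U.Nonempty → V.Nonempty →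
    ∃ n : ℕ, (f^[n] '' U ∩ V).Nonempty

/-- Topological mixing. -/
def IsMixing {X : Type*} [TopologicalSpace X] (f : X → X) : Prop :=
  ∀ U V : Set X, IsOpen U → IsOpen V → U.Nonempty → V.Nonempty →
    ∃ N : ℕ, ∀ n ≥ N, (f^[n] '' U ∩ V).Nonempty

/-- Weak mixing: `f × f` is transitive. -/
def IsWeaklyMixing {X : Type*} [TopologicalSpace X] (f : X → X) : Prop :=
  IsTransitive (fun p : X × X => (f p.1, f p.2))

/-- The set of periodic points. -/
def Periodics {X : Type*} (f : X → X) : Set X := {x | ∃ n ≥ 1, f^[n] x = x}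

open Metric Set
set_option linter.unusedSectionVars false

section Aux

lemma prodMap_iterate {α β : Type*} (g : α → α) (h : β → β) (n : ℕ) :
    (fun p : α × β => (g p.1, h p.2))^[n] = fun p => (g^[n] p.1, h^[n] p.2) := by
  induction n with
  | zero => rfl
  | succ n ih =>
    funext p
    rw [Function.iterate_succ_apply', Function.iterate_succ_apply',
      Function.iterate_succ_apply', ih]

/-- A weakly mixing map is transitive. -/
lemma IsWeaklyMixing.isTransitive {Y : Type*} [TopologicalSpace Y] {g : Y → Y}
    (h : IsWeaklyMixing g) : IsTransitive g := by
  intro U V hU hV hUne hVne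
  obtain ⟨n, p, ⟨q, hq, hqp⟩, hpV⟩ := h (U ×ˢ U) (V ×ˢ V) (hU.prod hU) (hV.prod hV)
    (hUne.prod hUne) (hVne.prod hVne)
  rw [prodMap_iterate] at hqp
  refine ⟨n, p.1, ⟨q.1, hq.1, ?_⟩, hpV.1⟩
  exact congrArg Prod.fst hqp

variable {X : Type*} [MetricSpace X] [CompactSpace X] {f : X → X}

lemma barMap_iterate_coe (hf : Continuous f) (n : ℕ) (A : NonemptyCompacts X) :
    (((barMap f hf)^[n] A : Set X)) = f^[n] '' (A : Set X) := by
  induction n with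
  | zero => simp
  | succ n ih =>
    rw [Function.iterate_succ_apply']
    show f '' (((barMap f hf)^[n] A : Set X)) = _
    rw [ih, Function.iterate_succ' f n, Set.image_comp]

/-- Furstenberg's nesting lemma for weakly mixing maps. -/
lemma wm_key (hWM : IsWeaklyMixing f) (hf : Continuous f)
    {U₁ V₁ U₂ V₂ : Set X} (hU₁ : IsOpen U₁) (hV₁ : IsOpen V₁)
    (hU₂ : IsOpen U₂) (hV₂ : IsOpen V₂)
    (hU₁n : U₁.Nonempty) (hV₁n : V₁.Nonempty) (hU₂n : U₂.Nonempty) (hV₂n : V₂.Nonempty) :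
    ∃ U V : Set X, IsOpen U ∧ IsOpen V ∧ U.Nonempty ∧ V.Nonempty ∧
      ∀ m, (f^[m] '' U ∩ V).Nonempty →
        (f^[m] '' U₁ ∩ V₁).Nonempty ∧ (f^[m] '' U₂ ∩ V₂).Nonempty := by
  obtain ⟨n, p, ⟨q, hq, hqp⟩, hp⟩ := hWM (U₁ ×ˢ V₁) (U₂ ×ˢ V₂) (hU₁.prod hV₁)
    (hU₂.prod hV₂) (hU₁n.prod hV₁n) (hU₂n.prod hV₂n)
  rw [prodMap_iterate] at hqp
  subst hqp
  refine ⟨U₁ ∩ f^[n] ⁻¹' U₂, V₁ ∩ f^[n] ⁻¹' V₂,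
    hU₁.inter (hU₂.preimage (hf.iterate n)), hV₁.inter (hV₂.preimage (hf.iterate n)),
    ⟨q.1, hq.1, hp.1⟩, ⟨q.2, hq.2, hp.2⟩, ?_⟩
  rintro m ⟨y, ⟨x, ⟨hxU₁, hxU₂⟩, rfl⟩, hyV₁, hyV₂⟩
  refine ⟨⟨f^[m] x, ⟨x, hxU₁, rfl⟩, hyV₁⟩, f^[m] (f^[n] x), ⟨f^[n] x, hxU₂, rfl⟩, ?_⟩
  rw [← Function.iterate_add_apply, Nat.add_comm, Function.iterate_add_apply]
  exact hyV₂

/-- Simultaneous transitivity over any finite family of pairs of open sets. -/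
lemma wm_multi (hWM : IsWeaklyMixing f) (hf : Continuous f) [Nonempty X]
    (P : Set (Set X × Set X)) (hP : P.Finite)
    (hop : ∀ p ∈ P, IsOpen p.1 ∧ IsOpen p.2 ∧ p.1.Nonempty ∧ p.2.Nonempty) :
    ∃ n : ℕ, ∀ p ∈ P, (f^[n] '' p.1 ∩ p.2).Nonempty := by
  have key : ∃ U V : Set X, IsOpen U ∧ IsOpen V ∧ U.Nonempty ∧ V.Nonempty ∧
      ∀ m, (f^[m] '' U ∩ V).Nonempty → ∀ p ∈ P, (f^[m] '' p.1 ∩ p.2).Nonempty := by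
    revert hop
    refine Set.Finite.induction_on P hP ?_ ?_
    · exact fun _ => ⟨univ, univ, isOpen_univ, isOpen_univ, univ_nonempty, univ_nonempty,
        fun _ _ p hp => absurd hp (notMem_empty p)⟩
    · rintro a s has hs ih hop
      obtain ⟨U', V', hU', hV', hU'n, hV'n, h'⟩ := ih fun p hp => hop p (mem_insert_of_mem _ hp)
      obtain ⟨hA1, hA2, hA3, hA4⟩ := hop a (mem_insert _ _)
      obtain ⟨U, V, hU, hV, hUn, hVn, h⟩ := wm_key hWM hf hU' hV' hA1 hA2 hU'n hV'n hA3 hA4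
      refine ⟨U, V, hU, hV, hUn, hVn, fun m hm p hp => ?_⟩
      obtain ⟨h1, h2⟩ := h m hm
      rcases hp with rfl | hp
      · exact h2
      · exact h' m h1 p hp
  obtain ⟨U, V, hU, hV, hUn, hVn, h⟩ := key
  obtain ⟨n, hn⟩ := hWM.isTransitive U V hU hV hUn hVn
  exact ⟨n, h n hn⟩

/-- `{A | ↑A ⊆ U}` is open in the hyperspace. -/
lemma isOpen_hyperSub {U : Set X} (hU : IsOpen U) :
    IsOpen {A : NonemptyCompacts X | (A : Set X) ⊆ U} := by
  rw [Metric.isOpen_iff]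
  intro A hA
  obtain ⟨δ, hδ, hthick⟩ := A.isCompact.exists_thickening_subset_open hU hA
  refine ⟨δ, hδ, fun B hB => ?_⟩
  intro x hx
  have hfin : EMetric.hausdorffEdist (B : Set X) (A : Set X) ≠ ⊤ :=
    hausdorffEdist_ne_top_of_nonempty_of_bounded B.nonempty A.nonempty
      B.isCompact.isBounded A.isCompact.isBounded
  have hd : hausdorffDist (B : Set X) (A : Set X) < δ := by
    rw [← NonemptyCompacts.dist_eq]; exact mem_ball.1 hB
  obtain ⟨y, hy, hxy⟩ := exists_dist_lt_of_hausdorffDist_lt hx hd hfin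
  exact hthick (mem_thickening_iff.2 ⟨y, hy, hxy⟩)

/-- `{A | A meets U}` is open in the hyperspace. -/
lemma isOpen_hyperHits {U : Set X} (hU : IsOpen U) :
    IsOpen {A : NonemptyCompacts X | ((A : Set X) ∩ U).Nonempty} := by
  rw [Metric.isOpen_iff]
  rintro A ⟨x, hxA, hxU⟩
  obtain ⟨δ, hδ, hball⟩ := Metric.isOpen_iff.1 hU x hxU
  refine ⟨δ, hδ, fun B hB => ?_⟩
  have hfin : EMetric.hausdorffEdist (A : Set X) (B : Set X) ≠ ⊤ :=
    hausdorffEdist_ne_top_of_nonempty_of_bounded A.nonempty B.nonempty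
      A.isCompact.isBounded B.isCompact.isBounded
  have hd : hausdorffDist (A : Set X) (B : Set X) < δ := by
    rw [hausdorffDist_comm, ← NonemptyCompacts.dist_eq]; exact mem_ball.1 hB
  obtain ⟨y, hy, hxy⟩ := exists_dist_lt_of_hausdorffDist_lt hxA hd hfin
  exact ⟨y, hy, hball (mem_ball.2 (by rw [dist_comm]; exact hxy))⟩

/-- From simultaneous transitivity, build a finite set close to `A` whose `n`-th image
is close to `B`. -/
lemma build_approx (hf : Continuous f) {tA tB : Set X} (hA : tA.Finite) (hB : tB.Finite)
    (A B : NonemptyCompacts X) {r : ℝ} (hr : 0 < r) (htA : tA ⊆ (A : Set X))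
    (htB : tB ⊆ (B : Set X))
    (covA : (A : Set X) ⊆ ⋃ x ∈ tA, ball x (r / 2))
    (covB : (B : Set X) ⊆ ⋃ x ∈ tB, ball x (r / 2))
    (tAne : tA.Nonempty) (tBne : tB.Nonempty)
    {n : ℕ} (hn : ∀ a ∈ tA, ∀ b ∈ tB, (f^[n] '' ball a (r / 2) ∩ ball b (r / 2)).Nonempty) :
    ∃ K : NonemptyCompacts X, dist K A ≤ r ∧ dist ((barMap f hf)^[n] K) B ≤ r := by
  have hch : ∀ (a : tA) (b : tB), ∃ z, z ∈ ball (a : X) (r / 2) ∧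
      f^[n] z ∈ ball (b : X) (r / 2) := by
    rintro ⟨a, ha⟩ ⟨b, hb⟩
    obtain ⟨y, ⟨z, hz, rfl⟩, hy⟩ := hn a ha b hb
    exact ⟨z, hz, hy⟩
  choose x hx1 hx2 using hch
  haveI : Finite tA := hA.to_subtype
  haveI : Finite tB := hB.to_subtype
  haveI : Nonempty tA := tAne.to_subtype
  haveI : Nonempty tB := tBne.to_subtype
  set S : Set X := Set.range (fun p : tA × tB => x p.1 p.2) with hS
  have hSfin : S.Finite := Set.finite_range _
  have hSne : S.Nonempty := Set.range_nonempty _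
  refine ⟨⟨⟨S, hSfin.isCompact⟩, hSne⟩, ?_, ?_⟩
  · rw [NonemptyCompacts.dist_eq]
    apply hausdorffDist_le_of_mem_dist hr.le
    · rintro z ⟨⟨a, b⟩, rfl⟩
      refine ⟨a, htA a.2, ?_⟩
      have := mem_ball.1 (hx1 a b)
      linarith
    · intro p hp
      obtain ⟨a, ha, hpa⟩ := Set.mem_iUnion₂.1 (covA hp)
      obtain ⟨b⟩ := ‹Nonempty tB›
      refine ⟨x ⟨a, ha⟩ b, ⟨(⟨a, ha⟩, b), rfl⟩, ?_⟩
      have h1 := mem_ball.1 hpa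
      have h2 := mem_ball.1 (hx1 ⟨a, ha⟩ b)
      calc dist p (x ⟨a, ha⟩ b) ≤ dist p a + dist (x ⟨a, ha⟩ b) a := dist_triangle_right _ _ _
        _ ≤ r := by linarith
  · rw [NonemptyCompacts.dist_eq, barMap_iterate_coe]
    apply hausdorffDist_le_of_mem_dist hr.le
    · rintro w ⟨z, ⟨⟨a, b⟩, rfl⟩, rfl⟩
      refine ⟨b, htB b.2, ?_⟩
      have := mem_ball.1 (hx2 a b)
      linarith
    · intro q hq
      obtain ⟨b, hb, hqb⟩ := Set.mem_iUnion₂.1 (covB hq)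
      obtain ⟨a⟩ := ‹Nonempty tA›
      refine ⟨f^[n] (x a ⟨b, hb⟩), ⟨x a ⟨b, hb⟩, ⟨(a, ⟨b, hb⟩), rfl⟩, rfl⟩, ?_⟩
      have h1 := mem_ball.1 hqb
      have h2 := mem_ball.1 (hx2 a ⟨b, hb⟩)
      calc dist q (f^[n] (x a ⟨b, hb⟩)) ≤ dist q b + dist (f^[n] (x a ⟨b, hb⟩)) b :=
          dist_triangle_right _ _ _
        _ ≤ r := by linarith

/-- Weak mixing of `f` implies weak mixing of the induced hyperspace map. -/
lemma wm_bar (hWM : IsWeaklyMixing f) (hf : Continuous f) [Nonempty X] :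
    IsWeaklyMixing (barMap f hf) := by
  intro O O' hO hO' hOne hO'ne
  obtain ⟨⟨A₁, A₂⟩, hAO⟩ := hOne
  obtain ⟨⟨B₁, B₂⟩, hBO⟩ := hO'ne
  obtain ⟨u₁, u₂, hu₁, hu₂, hA₁u, hA₂u, hu⟩ := isOpen_prod_iff.1 hO A₁ A₂ hAO
  obtain ⟨v₁, v₂, hv₁, hv₂, hB₁v, hB₂v, hv⟩ := isOpen_prod_iff.1 hO' B₁ B₂ hBO
  obtain ⟨ε₁, hε₁, hball₁⟩ := Metric.isOpen_iff.1 hu₁ A₁ hA₁u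
  obtain ⟨ε₂, hε₂, hball₂⟩ := Metric.isOpen_iff.1 hu₂ A₂ hA₂u
  obtain ⟨ε₃, hε₃, hball₃⟩ := Metric.isOpen_iff.1 hv₁ B₁ hB₁v
  obtain ⟨ε₄, hε₄, hball₄⟩ := Metric.isOpen_iff.1 hv₂ B₂ hB₂v
  set ε : ℝ := min (min ε₁ ε₂) (min ε₃ ε₄) with hεdef
  have hε : 0 < ε := lt_min (lt_min hε₁ hε₂) (lt_min hε₃ hε₄)
  set r : ℝ := ε / 2 with hrdef
  have hr : 0 < r := by positivity
  have hr2 : 0 < r / 2 := by positivity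
  -- finite covers of the four compact sets
  obtain ⟨tA₁, htA₁, hfA₁, covA₁⟩ := A₁.isCompact.finite_cover_balls hr2
  obtain ⟨tA₂, htA₂, hfA₂, covA₂⟩ := A₂.isCompact.finite_cover_balls hr2
  obtain ⟨tB₁, htB₁, hfB₁, covB₁⟩ := B₁.isCompact.finite_cover_balls hr2
  obtain ⟨tB₂, htB₂, hfB₂, covB₂⟩ := B₂.isCompact.finite_cover_balls hr2
  have hne : ∀ (C : NonemptyCompacts X) (t : Set X),
      (C : Set X) ⊆ ⋃ x ∈ t, ball x (r / 2) → t.Nonempty := by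
    intro C t hcov
    obtain ⟨c, hc⟩ := C.nonempty
    obtain ⟨a, ha, -⟩ := Set.mem_iUnion₂.1 (hcov hc)
    exact ⟨a, ha⟩
  -- the finite family of pairs of balls
  set P : Set (Set X × Set X) :=
    (fun ab : X × X => (ball ab.1 (r / 2), ball ab.2 (r / 2))) ''
      ((tA₁ ×ˢ tB₁) ∪ (tA₂ ×ˢ tB₂)) with hP
  have hPfin : P.Finite := (((hfA₁.prod hfB₁).union (hfA₂.prod hfB₂))).image _
  have hPop : ∀ p ∈ P, IsOpen p.1 ∧ IsOpen p.2 ∧ p.1.Nonempty ∧ p.2.Nonempty := by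
    rintro p ⟨⟨a, b⟩, -, rfl⟩
    exact ⟨isOpen_ball, isOpen_ball, nonempty_ball.2 hr2, nonempty_ball.2 hr2⟩
  obtain ⟨n, hn⟩ := wm_multi hWM hf P hPfin hPop
  have hn₁ : ∀ a ∈ tA₁, ∀ b ∈ tB₁, (f^[n] '' ball a (r / 2) ∩ ball b (r / 2)).Nonempty :=
    fun a ha b hb => hn _ ⟨(a, b), Or.inl ⟨ha, hb⟩, rfl⟩
  have hn₂ : ∀ a ∈ tA₂, ∀ b ∈ tB₂, (f^[n] '' ball a (r / 2) ∩ ball b (r / 2)).Nonempty :=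
    fun a ha b hb => hn _ ⟨(a, b), Or.inr ⟨ha, hb⟩, rfl⟩
  obtain ⟨K₁, hK₁A, hK₁B⟩ := build_approx hf hfA₁ hfB₁ A₁ B₁ hr htA₁ htB₁ covA₁ covB₁
    (hne A₁ tA₁ covA₁) (hne B₁ tB₁ covB₁) hn₁
  obtain ⟨K₂, hK₂A, hK₂B⟩ := build_approx hf hfA₂ hfB₂ A₂ B₂ hr htA₂ htB₂ covA₂ covB₂
    (hne A₂ tA₂ covA₂) (hne B₂ tB₂ covB₂) hn₂
  have hrε : r < ε := by rw [hrdef]; linarith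
  refine ⟨n, ((barMap f hf)^[n] K₁, (barMap f hf)^[n] K₂),
    ⟨(K₁, K₂), hu ⟨?_, ?_⟩, by rw [prodMap_iterate]⟩, hv ⟨?_, ?_⟩⟩
  · exact hball₁ (mem_ball.2 (hK₁A.trans_lt (hrε.trans_le
      ((min_le_left _ _).trans (min_le_left _ _)))))
  · exact hball₂ (mem_ball.2 (hK₂A.trans_lt (hrε.trans_le
      ((min_le_left _ _).trans (min_le_right _ _)))))
  · exact hball₃ (mem_ball.2 (hK₁B.trans_lt (hrε.trans_le
      ((min_le_right _ _).trans (min_le_left _ _)))))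
  · exact hball₄ (mem_ball.2 (hK₂B.trans_lt (hrε.trans_le
      ((min_le_right _ _).trans (min_le_right _ _)))))

/-- The (∗) condition obtained from transitivity of the hyperspace map. -/
lemma star_of_barTrans (hf : Continuous f) (hT : IsTransitive (barMap f hf))
    (U V₁ V₂ : Set X) (hU : IsOpen U) (hV₁ : IsOpen V₁) (hV₂ : IsOpen V₂)
    (hUn : U.Nonempty) (hV₁n : V₁.Nonempty) (hV₂n : V₂.Nonempty) :
    ∃ n : ℕ, (f^[n] '' U ∩ V₁).Nonempty ∧ (f^[n] '' U ∩ V₂).Nonempty := by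
  obtain ⟨u, hu⟩ := hUn
  obtain ⟨w₁, hw₁⟩ := hV₁n
  obtain ⟨w₂, hw₂⟩ := hV₂n
  set 𝒰 : Set (NonemptyCompacts X) := {A | (A : Set X) ⊆ U} with h𝒰
  set 𝒱 : Set (NonemptyCompacts X) :=
    {A | (A : Set X) ⊆ V₁ ∪ V₂} ∩ ({A | ((A : Set X) ∩ V₁).Nonempty} ∩
      {A | ((A : Set X) ∩ V₂).Nonempty}) with h𝒱
  have h𝒰o : IsOpen 𝒰 := isOpen_hyperSub hU
  have h𝒱o : IsOpen 𝒱 :=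
    (isOpen_hyperSub (hV₁.union hV₂)).inter ((isOpen_hyperHits hV₁).inter (isOpen_hyperHits hV₂))
  have h𝒰n : 𝒰.Nonempty := ⟨⟨⟨{u}, isCompact_singleton⟩, ⟨u, rfl⟩⟩, by
    exact Set.singleton_subset_iff.2 hu⟩
  have h𝒱n : 𝒱.Nonempty := by
    refine ⟨⟨⟨{w₁, w₂}, ((Set.finite_singleton w₂).insert w₁).isCompact⟩,
      ⟨w₁, Set.mem_insert _ _⟩⟩, ?_, ⟨w₁, Set.mem_insert _ _, hw₁⟩,
      ⟨w₂, Set.mem_insert_of_mem _ rfl, hw₂⟩⟩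
    rintro z (rfl | rfl)
    · exact Or.inl hw₁
    · exact Or.inr hw₂
  obtain ⟨n, C, ⟨A, hA, rfl⟩, -, h1, h2⟩ := hT 𝒰 𝒱 h𝒰o h𝒱o h𝒰n h𝒱n
  rw [Set.mem_setOf_eq, barMap_iterate_coe] at h1 h2
  refine ⟨n, ?_, ?_⟩
  · exact h1.mono (Set.inter_subset_inter_left _ (Set.image_mono hA))
  · exact h2.mono (Set.inter_subset_inter_left _ (Set.image_mono hA))

/-- The (∗) condition implies weak mixing. -/
lemma wm_of_star (hf : Continuous f)
    (hstar : ∀ U V₁ V₂ : Set X, IsOpen U → IsOpen V₁ → IsOpen V₂ →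
      U.Nonempty → V₁.Nonempty → V₂.Nonempty →
      ∃ n : ℕ, (f^[n] '' U ∩ V₁).Nonempty ∧ (f^[n] '' U ∩ V₂).Nonempty) :
    IsWeaklyMixing f := by
  intro O O' hO hO' hOne hO'ne
  obtain ⟨⟨p₁, p₂⟩, hp⟩ := hOne
  obtain ⟨⟨q₁, q₂⟩, hq⟩ := hO'ne
  obtain ⟨U₁, U₂, hU₁, hU₂, hp₁, hp₂, hUsub⟩ := isOpen_prod_iff.1 hO p₁ p₂ hp
  obtain ⟨V₁, V₂, hV₁, hV₂, hq₁, hq₂, hVsub⟩ := isOpen_prod_iff.1 hO' q₁ q₂ hq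
  -- first application: source U₁, targets U₂ and V₂
  obtain ⟨m, h1, h2⟩ := hstar U₁ U₂ V₂ hU₁ hU₂ hV₂ ⟨p₁, hp₁⟩ ⟨p₂, hp₂⟩ ⟨q₂, hq₂⟩
  obtain ⟨-, ⟨x₀, hx₀U₁, rfl⟩, hx₀U₂⟩ := h1
  obtain ⟨-, ⟨y₀, hy₀U₁, rfl⟩, hy₀V₂⟩ := h2
  -- second application: source U₁ ∩ f^[m]⁻¹ U₂, targets V₁ and f^[m]⁻¹ V₂
  have hAo : IsOpen (U₁ ∩ f^[m] ⁻¹' U₂) := hU₁.inter (hU₂.preimage (hf.iterate m))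
  have hAn : (U₁ ∩ f^[m] ⁻¹' U₂).Nonempty := ⟨x₀, hx₀U₁, hx₀U₂⟩
  have hWo : IsOpen (f^[m] ⁻¹' V₂) := hV₂.preimage (hf.iterate m)
  have hWn : (f^[m] ⁻¹' V₂).Nonempty := ⟨y₀, hy₀V₂⟩
  obtain ⟨k, g1, g2⟩ := hstar (U₁ ∩ f^[m] ⁻¹' U₂) V₁ (f^[m] ⁻¹' V₂)
    hAo hV₁ hWo hAn ⟨q₁, hq₁⟩ hWn
  obtain ⟨-, ⟨x, ⟨hxU₁, -⟩, rfl⟩, hxV₁⟩ := g1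
  obtain ⟨-, ⟨y, ⟨-, hyU₂⟩, rfl⟩, hyV₂⟩ := g2
  refine ⟨k, (f^[k] x, f^[k] (f^[m] y)), ⟨(x, f^[m] y), hUsub ⟨hxU₁, hyU₂⟩,
    by rw [prodMap_iterate]⟩, hVsub ⟨hxV₁, ?_⟩⟩
  show f^[k] (f^[m] y) ∈ V₂
  rw [← Function.iterate_add_apply, Nat.add_comm, Function.iterate_add_apply]
  exact hyV₂

end Aux

/--  weakly mixing ↔  weakly mixing ↔  transitive. -/
theorem weaklyMixing_iff_hyper
    {X : Type*} [MetricSpace X] [CompactSpace X]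
    (f : X → X) (hf : Continuous f) :
    (IsWeaklyMixing f ↔ IsWeaklyMixing (barMap f hf)) ∧
    (IsWeaklyMixing f ↔ IsTransitive (barMap f hf)) := by
  rcases isEmpty_or_nonempty X with hX | hX
  · have hWMf : IsWeaklyMixing f := by
      intro U V _ _ hU _
      obtain ⟨p, -⟩ := hU
      exact (hX.false p.1).elim
    have hWMbar : IsWeaklyMixing (barMap f hf) := by
      intro U V _ _ hU _
      obtain ⟨p, -⟩ := hU
      obtain ⟨x, -⟩ := p.1.nonempty
      exact (hX.false x).elim
    have hTbar : IsTransitive (barMap f hf) := by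
      intro U V _ _ hU _
      obtain ⟨A, -⟩ := hU
      obtain ⟨x, -⟩ := A.nonempty
      exact (hX.false x).elim
    exact ⟨⟨fun _ => hWMbar, fun _ => hWMf⟩, ⟨fun _ => hTbar, fun _ => hWMf⟩⟩
  · have h1 : IsWeaklyMixing f → IsWeaklyMixing (barMap f hf) := fun h => wm_bar h hf
    have h3 : IsTransitive (barMap f hf) → IsWeaklyMixing f := fun h =>
      wm_of_star hf (star_of_barTrans hf h)
    exact ⟨⟨h1, fun h => h3 h.isTransitive⟩, ⟨fun h => (h1 h).isTransitive, h3⟩⟩
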